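/- arXiv:1402.2460 — 4 statements merged into one kernel-verified Lean document; each statement's English description precedes it below -/
import Mathlib

section
/- (Theorem 1, forward direction) If (R̄, r̄, s̄, t) is an optimal solution of problem (III), then (R̄, r̄, ŝ, t), where ŝ_i := R̄_i − r̄_i for every i ∈ V, is an optimal solution of problem (III′), and moreover ∑_{i∈V} Q_i(ŝ_i) + ∑_{(i,j)∈E} P_{ij}(t_{ij}) = ∑_{i∈V} P_i(s̄_i) + ∑_{(i,j)∈E} P_{ij}(t_{ij}). -/
/-- Feasibility for problem (III): constraints (IIa), (IIb), (IIc), (IId), (IIf), (IIg)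
and the lower bound on `t`. -/
def FeasIII {V : Type*} (E : Finset (V × V)) (T Nbar : ℝ) (w : V × V → ℝ)
    (R r s : V → ℝ) (t : V × V → ℝ) : Prop :=
  (∀ i, s i ≤ R i - r i) ∧
  (∀ i, R i - r i ≤ T) ∧
  (∀ e ∈ E, -(T * w e) ≤ r e.2 - r e.1) ∧
  (∀ i, 0 ≤ R i ∧ R i ≤ Nbar) ∧
  (∀ i, 0 ≤ r i ∧ r i ≤ Nbar) ∧
  (∀ i, 0 ≤ s i ∧ s i ≤ T) ∧
  (∀ e ∈ E, t e ≤ R e.2 - R e.1) ∧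
  (∀ e ∈ E, -(T * w e) ≤ t e)

/-- Feasibility for problem (III′): constraints (IIc), (IId), (IIf), (IIg),
the lower bound on `t`, and the equality `R̄ i - r̄ i = s̄ i`. -/
def FeasIII' {V : Type*} (E : Finset (V × V)) (T Nbar : ℝ) (w : V × V → ℝ)
    (R r s : V → ℝ) (t : V × V → ℝ) : Prop :=
  (∀ e ∈ E, -(T * w e) ≤ r e.2 - r e.1) ∧
  (∀ i, 0 ≤ R i ∧ R i ≤ Nbar) ∧
  (∀ i, 0 ≤ r i ∧ r i ≤ Nbar) ∧
  (∀ i, 0 ≤ s i ∧ s i ≤ T) ∧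
  (∀ e ∈ E, t e ≤ R e.2 - R e.1) ∧
  (∀ e ∈ E, -(T * w e) ≤ t e) ∧
  (∀ i, R i - r i = s i)

/-- Objective value `∑ i, G i (s i) + ∑ (i,j) ∈ E, Pe (i,j) (t (i,j))`
for a vertex cost family `G` and edge cost family `Pe`. -/
def objFn {V : Type*} [Fintype V] (E : Finset (V × V)) (G : V → ℝ → ℝ)
    (Pe : V × V → ℝ → ℝ) (s : V → ℝ) (t : V × V → ℝ) : ℝ :=
  ∑ i, G i (s i) + ∑ e ∈ E, Pe e (t e)

/-- The envelope `Q i (x) = P i (min x (sstar i))`, i.e. `Q i x = P i x` for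
`x ≤ sstar i` and `Q i x = P i (sstar i)` for `x > sstar i`. -/
def Qfun {V : Type*} (P : V → ℝ → ℝ) (sstar : V → ℝ) (i : V) (x : ℝ) : ℝ :=
  P i (min x (sstar i))

lemma conv_mono_aux {f : ℝ → ℝ} (hf : ConvexOn ℝ Set.univ f) {m : ℝ}
    (hm : ∀ x, f m ≤ f x) {a b : ℝ} (hab : a ≤ b) (hbm : b ≤ m) :
    f b ≤ f a := by
  rcases eq_or_lt_of_le hab with h | h
  · exact le_of_eq (congrArg f h.symm)
  have ham : a < m := lt_of_lt_of_le h hbm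
  have hd : 0 < m - a := by linarith
  set μ := (b - a) / (m - a) with hμdef
  have hμ0 : 0 ≤ μ := div_nonneg (by linarith) hd.le
  have hμ1 : μ ≤ 1 := (div_le_one hd).2 (by linarith)
  have hb : b = (1 - μ) * a + μ * m := by
    rw [hμdef]; field_simp; ring
  have hkey := hf.2 (Set.mem_univ a) (Set.mem_univ m)
    (by linarith : (0:ℝ) ≤ 1 - μ) hμ0 (by ring)
  rw [smul_eq_mul, smul_eq_mul, smul_eq_mul, smul_eq_mul] at hkey
  calc f b = f ((1 - μ) * a + μ * m) := by rw [← hb]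
    _ ≤ (1 - μ) * f a + μ * f m := hkey
    _ ≤ (1 - μ) * f a + μ * f a := by nlinarith [hm a]
    _ = f a := by ring

/-- Theorem 1, forward direction: if `(R̄, r̄, s̄, t)` is an optimal solution of
problem (III), then `(R̄, r̄, ŝ, t)` with `ŝ i = R̄ i - r̄ i` is an optimal solution
of problem (III′), and the two objective values coincide. -/
theorem theorem1_forward
    (V : Type*) [Fintype V]
    (E : Finset (V × V))
    (T Nbar : ℝ) (hT : 0 < T) (hN : 0 ≤ Nbar)
    (w : V × V → ℝ) (hw : ∀ e ∈ E, 0 ≤ w e)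
    (P : V → ℝ → ℝ) (hPconv : ∀ i, ConvexOn ℝ Set.univ (P i))
    (sstar : V → ℝ) (hmin : ∀ i x, P i (sstar i) ≤ P i x)
    (hs0 : ∀ i, 0 ≤ sstar i) (hsT : ∀ i, sstar i ≤ T)
    (Pe : V × V → ℝ → ℝ)
    (R r s : V → ℝ) (t : V × V → ℝ)
    (hfeas : FeasIII E T Nbar w R r s t)
    (hopt : ∀ R' r' s' t', FeasIII E T Nbar w R' r' s' t' →
      objFn E P Pe s t ≤ objFn E P Pe s' t') :
    FeasIII' E T Nbar w R r (fun i => R i - r i) t ∧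
    (∀ R' r' s' t', FeasIII' E T Nbar w R' r' s' t' →
      objFn E (Qfun P sstar) Pe (fun i => R i - r i) t ≤
        objFn E (Qfun P sstar) Pe s' t') ∧
    objFn E (Qfun P sstar) Pe (fun i => R i - r i) t = objFn E P Pe s t := by
  obtain ⟨hIIa, hIIb, hIIc, hIId, hIId', hIIf, hIIg, ht⟩ := hfeas
  -- ŝ i = R i - r i bounds
  have hhat0 : ∀ i, 0 ≤ R i - r i := fun i => le_trans (hIIf i).1 (hIIa i)
  -- pointwise Q (ŝ i) ≤ P (s i)
  have hptle : ∀ i, Qfun P sstar i (R i - r i) ≤ P i (s i) := by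
    intro i
    unfold Qfun
    rcases le_total (R i - r i) (sstar i) with h | h
    · rw [min_eq_left h]
      exact conv_mono_aux (hPconv i) (hmin i) (hIIa i) h
    · rw [min_eq_right h]
      exact hmin i (s i)
  -- the modified s'' is III-feasible
  have hfeas'' : FeasIII E T Nbar w R r (fun i => min (R i - r i) (sstar i)) t := by
    refine ⟨fun i => min_le_left _ _, hIIb, hIIc, hIId, hIId',
      fun i => ⟨le_min (hhat0 i) (hs0 i), le_trans (min_le_right _ _) (hsT i)⟩, hIIg, ht⟩
  -- objective equality
  have hobjle : objFn E (Qfun P sstar) Pe (fun i => R i - r i) t ≤ objFn E P Pe s t := by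
    unfold objFn
    gcongr with i
    exact hptle i
  have hobjge : objFn E P Pe s t ≤ objFn E (Qfun P sstar) Pe (fun i => R i - r i) t := by
    have := hopt R r (fun i => min (R i - r i) (sstar i)) t hfeas''
    simpa [objFn, Qfun] using this
  have hobjeq : objFn E (Qfun P sstar) Pe (fun i => R i - r i) t = objFn E P Pe s t :=
    le_antisymm hobjle hobjge
  refine ⟨⟨hIIc, hIId, hIId', fun i => ⟨hhat0 i, hIIb i⟩, hIIg, ht, fun i => rfl⟩, ?_, hobjeq⟩
  intro R' r' s' t' hfe'
  obtain ⟨hc', hd1', hd2', hf', hg', ht', heq'⟩ := hfe'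
  have hfeasY : FeasIII E T Nbar w R' r' (fun i => min (s' i) (sstar i)) t' := by
    refine ⟨fun i => (heq' i) ▸ min_le_left _ _,
      fun i => (heq' i) ▸ (hf' i).2, hc', hd1', hd2',
      fun i => ⟨le_min (hf' i).1 (hs0 i), le_trans (min_le_right _ _) (hsT i)⟩, hg', ht'⟩
  calc objFn E (Qfun P sstar) Pe (fun i => R i - r i) t
      = objFn E P Pe s t := hobjeq
    _ ≤ objFn E P Pe (fun i => min (s' i) (sstar i)) t' := hopt _ _ _ _ hfeasY
    _ = objFn E (Qfun P sstar) Pe s' t' := by simp [objFn, Qfun]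
end

section
/- (Theorem 1, converse direction) If (R̂, r̂, ŝ, t) is an optimal solution of problem (III′), then (R̂, r̂, s̄, t), where s̄_i := min(s_i*, ŝ_i) for every i ∈ V, is an optimal solution of problem (III), and moreover the (III)-objective value of (R̂, r̂, s̄, t) equals the (III′)-objective value of (R̂, r̂, ŝ, t). -/
lemma convex_mono_left {f : ℝ → ℝ} (hf : ConvexOn ℝ Set.univ f) {a b m : ℝ}
    (hm : f m ≤ f a) (hab : a ≤ b) (hbm : b ≤ m) : f b ≤ f a := by
  rcases eq_or_lt_of_le (hab.trans hbm) with h | h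
  · have hab' : a = b := le_antisymm hab (hbm.trans h.ge)
    simp [hab']
  · set l := (b - a) / (m - a) with hl
    have hma : 0 < m - a := by linarith
    have hl0 : 0 ≤ l := div_nonneg (by linarith) hma.le
    have hl1 : l ≤ 1 := by rw [hl, div_le_one hma]; linarith
    have hcancel : l * (m - a) = b - a := div_mul_cancel₀ _ hma.ne'
    have hb : b = (1 - l) * a + l * m := by nlinarith
    have hc := hf.2 (Set.mem_univ a) (Set.mem_univ m)
      (by linarith : (0:ℝ) ≤ 1 - l) hl0 (by ring)
    rw [smul_eq_mul, smul_eq_mul, smul_eq_mul, smul_eq_mul] at hc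
    calc f b = f ((1-l)*a + l*m) := by rw [← hb]
      _ ≤ (1-l) * f a + l * f m := hc
      _ ≤ (1-l) * f a + l * f a := by nlinarith
      _ = f a := by ring

/-- Theorem 1, converse direction: if `(R̂, r̂, ŝ, t)` is an optimal solution of
problem (III′), then `(R̂, r̂, s̄, t)` with `s̄ i = min (sstar i) (ŝ i)` is an optimal
solution of problem (III), and the (III)-objective value of `(R̂, r̂, s̄, t)` equals
the (III′)-objective value of `(R̂, r̂, ŝ, t)`. -/
theorem theorem1_converse
    (V : Type*) [Fintype V]
    (E : Finset (V × V))
    (T Nbar : ℝ) (hT : 0 < T) (hN : 0 ≤ Nbar)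
    (w : V × V → ℝ) (hw : ∀ e ∈ E, 0 ≤ w e)
    (P : V → ℝ → ℝ) (hPconv : ∀ i, ConvexOn ℝ Set.univ (P i))
    (sstar : V → ℝ) (hmin : ∀ i x, P i (sstar i) ≤ P i x)
    (hs0 : ∀ i, 0 ≤ sstar i) (hsT : ∀ i, sstar i ≤ T)
    (Pe : V × V → ℝ → ℝ)
    (R r s : V → ℝ) (t : V × V → ℝ)
    (hfeas : FeasIII' E T Nbar w R r s t)
    (hopt : ∀ R' r' s' t', FeasIII' E T Nbar w R' r' s' t' →
      objFn E (Qfun P sstar) Pe s t ≤ objFn E (Qfun P sstar) Pe s' t') :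
    FeasIII E T Nbar w R r (fun i => min (sstar i) (s i)) t ∧
    (∀ R' r' s' t', FeasIII E T Nbar w R' r' s' t' →
      objFn E P Pe (fun i => min (sstar i) (s i)) t ≤ objFn E P Pe s' t') ∧
    objFn E P Pe (fun i => min (sstar i) (s i)) t =
      objFn E (Qfun P sstar) Pe s t := by

  obtain ⟨hIIc, hR, hr, hs, ht1, ht2, heq⟩ := hfeas
  have hobjeq : objFn E P Pe (fun i => min (sstar i) (s i)) t =
      objFn E (Qfun P sstar) Pe s t := by
    unfold objFn Qfun
    congr 1
    exact Finset.sum_congr rfl fun i _ => by rw [min_comm]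
  refine ⟨?_, ?_, hobjeq⟩
  · refine ⟨fun i => ?_, fun i => ?_, hIIc, hR, hr, fun i => ⟨?_, ?_⟩, ht1, ht2⟩
    · rw [heq i]; exact min_le_right _ _
    · rw [heq i]; exact (hs i).2
    · exact le_min (hs0 i) (hs i).1
    · exact min_le_of_left_le (hsT i)
  · intro R' r' s' t' hF
    obtain ⟨hIIa', hIIb', hIIc', hR', hr', hs', ht1', ht2'⟩ := hF
    have hF'' : FeasIII' E T Nbar w R' r' (fun i => R' i - r' i) t' :=
      ⟨hIIc', hR', hr', fun i => ⟨le_trans (hs' i).1 (hIIa' i), hIIb' i⟩,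
        ht1', ht2', fun _ => rfl⟩
    have h1 := hopt R' r' (fun i => R' i - r' i) t' hF''
    have h2 : objFn E (Qfun P sstar) Pe (fun i => R' i - r' i) t' ≤
        objFn E P Pe s' t' := by
      unfold objFn Qfun
      have : ∀ i ∈ (Finset.univ : Finset V),
          P i (min (R' i - r' i) (sstar i)) ≤ P i (s' i) := by
        intro i _
        rcases le_total (R' i - r' i) (sstar i) with h | h
        · rw [min_eq_left h]
          exact convex_mono_left (hPconv i) (hmin i (s' i)) (hIIa' i) h
        · rw [min_eq_right h]
          exact hmin i (s' i)
      exact add_le_add (Finset.sum_le_sum this) le_rfl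
    calc objFn E P Pe (fun i => min (sstar i) (s i)) t
        = objFn E (Qfun P sstar) Pe s t := hobjeq
      _ ≤ objFn E (Qfun P sstar) Pe (fun i => R' i - r' i) t' := h1
      _ ≤ objFn E P Pe s' t' := h2
end

section
/- (Corollary of Theorem 1) The feasible set of problem (III) is nonempty if and only if the feasible set of problem (III′) is nonempty, and the infimum of the (III)-objective over the feasible set of (III) equals the infimum of the (III′)-objective over the feasible set of (III′). -/
/-- Corollary of Theorem 1: the feasible set of (III) is nonempty iff the feasible
set of (III′) is nonempty, and the infimum of the (III)-objective over the feasible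
set of (III) equals the infimum of the (III′)-objective over the feasible set of (III′). -/
theorem theorem1_corollary
    (V : Type*) [Fintype V]
    (E : Finset (V × V))
    (T Nbar : ℝ) (hT : 0 < T) (hN : 0 ≤ Nbar)
    (w : V × V → ℝ) (hw : ∀ e ∈ E, 0 ≤ w e)
    (P : V → ℝ → ℝ) (hPconv : ∀ i, ConvexOn ℝ Set.univ (P i))
    (sstar : V → ℝ) (hmin : ∀ i x, P i (sstar i) ≤ P i x)
    (hs0 : ∀ i, 0 ≤ sstar i) (hsT : ∀ i, sstar i ≤ T)
    (Pe : V × V → ℝ → ℝ) :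
    ((∃ R r s t, FeasIII E T Nbar w R r s t) ↔
      (∃ R r s t, FeasIII' E T Nbar w R r s t)) ∧
    sInf {y : ℝ | ∃ R r s t, FeasIII E T Nbar w R r s t ∧ objFn E P Pe s t = y} =
      sInf {y : ℝ | ∃ R r s t, FeasIII' E T Nbar w R r s t ∧
        objFn E (Qfun P sstar) Pe s t = y} := by
  -- Monotonicity: P i nonincreasing left of sstar i
  have hmono : ∀ i (a b : ℝ), a ≤ b → b ≤ sstar i → P i b ≤ P i a := by
    intro i a b hab hbs
    have hb : b ∈ segment ℝ a (sstar i) := by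
      rw [segment_eq_Icc (hab.trans hbs)]; exact ⟨hab, hbs⟩
    have := (hPconv i).le_on_segment (Set.mem_univ a) (Set.mem_univ (sstar i)) hb
    calc P i b ≤ max (P i a) (P i (sstar i)) := this
      _ = P i a := max_eq_left (hmin i a)
  -- III → III′ with Q-objective ≤ P-objective
  have fwd : ∀ R r s t, FeasIII E T Nbar w R r s t →
      ∃ R' r' s' t', FeasIII' E T Nbar w R' r' s' t' ∧
        objFn E (Qfun P sstar) Pe s' t' ≤ objFn E P Pe s t := by
    intro R r s t ⟨h1, h2, h3, h4, h5, h6, h7, h8⟩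
    refine ⟨R, r, fun i => R i - r i, t,
      ⟨h3, h4, h5, fun i => ⟨le_trans (h6 i).1 (h1 i), h2 i⟩, h7, h8, fun i => rfl⟩, ?_⟩
    unfold objFn
    gcongr with j _
    show P j (min (R j - r j) (sstar j)) ≤ P j (s j)
    rcases le_total (sstar j) (R j - r j) with h | h
    · rw [min_eq_right h]; exact hmin j (s j)
    · rw [min_eq_left h]; exact hmono j (s j) (R j - r j) (h1 j) h
  -- III′ → III with equal objective
  have bwd : ∀ R r s t, FeasIII' E T Nbar w R r s t →
      ∃ R' r' s' t', FeasIII E T Nbar w R' r' s' t' ∧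
        objFn E P Pe s' t' = objFn E (Qfun P sstar) Pe s t := by
    intro R r s t ⟨h3, h4, h5, h6, h7, h8, heq⟩
    refine ⟨R, r, fun i => min (s i) (sstar i), t,
      ⟨fun i => by rw [heq i]; exact min_le_left _ _,
       fun i => by rw [heq i]; exact (h6 i).2, h3, h4, h5,
       fun i => ⟨le_min (h6 i).1 (hs0 i), le_trans (min_le_right _ _) (hsT i)⟩,
       h7, h8⟩, rfl⟩
  set A := {y : ℝ | ∃ R r s t, FeasIII E T Nbar w R r s t ∧ objFn E P Pe s t = y}
  set B := {y : ℝ | ∃ R r s t, FeasIII' E T Nbar w R r s t ∧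
    objFn E (Qfun P sstar) Pe s t = y}
  have hAB : ∀ a ∈ A, ∃ b ∈ B, b ≤ a := by
    rintro a ⟨R, r, s, t, hf, rfl⟩
    obtain ⟨R', r', s', t', hf', hle⟩ := fwd R r s t hf
    exact ⟨_, ⟨R', r', s', t', hf', rfl⟩, hle⟩
  have hBA : ∀ b ∈ B, ∃ a ∈ A, a ≤ b := by
    rintro b ⟨R, r, s, t, hf, rfl⟩
    obtain ⟨R', r', s', t', hf', hle⟩ := bwd R r s t hf
    exact ⟨_, ⟨R', r', s', t', hf', rfl⟩, le_of_eq hle⟩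
  constructor
  · constructor
    · rintro ⟨R, r, s, t, hf⟩
      obtain ⟨R', r', s', t', hf', -⟩ := fwd R r s t hf; exact ⟨R', r', s', t', hf'⟩
    · rintro ⟨R, r, s, t, hf⟩
      obtain ⟨R', r', s', t', hf', -⟩ := bwd R r s t hf; exact ⟨R', r', s', t', hf'⟩
  -- sInf equality
  rcases A.eq_empty_or_nonempty with hA | hA
  · have hB : B = ∅ := by
      rw [Set.eq_empty_iff_forall_notMem]
      intro b hb
      obtain ⟨a, ha, -⟩ := hBA b hb
      rw [hA] at ha; exact ha
    rw [hA, hB]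
  · have hB : B.Nonempty := by
      obtain ⟨a, ha⟩ := hA
      obtain ⟨b, hb, -⟩ := hAB a ha; exact ⟨b, hb⟩
    by_cases hAbd : BddBelow A
    · have hBbd : BddBelow B := by
        obtain ⟨m, hm⟩ := hAbd
        refine ⟨m - 0, fun b hb => ?_⟩
        obtain ⟨a, ha, hle⟩ := hBA b hb
        simpa using (hm ha).trans hle
      apply le_antisymm
      · refine le_csInf hB fun b hb => ?_
        obtain ⟨a, ha, hle⟩ := hBA b hb
        exact (csInf_le hAbd ha).trans hle
      · refine le_csInf hA fun a ha => ?_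
        obtain ⟨b, hb, hle⟩ := hAB a ha
        exact (csInf_le hBbd hb).trans hle
    · have hBbd : ¬ BddBelow B := by
        intro ⟨m, hm⟩
        apply hAbd
        refine ⟨m, fun a ha => ?_⟩
        obtain ⟨b, hb, hle⟩ := hAB a ha
        exact (hm hb).trans hle
      rw [Real.sInf_of_not_bddBelow hAbd, Real.sInf_of_not_bddBelow hBbd]
end

section
/- (Convexity of the penalty-extended cost function P̄) The function P̄ is convex on ℝ. -/
/-- Convexity of the penalty-extended cost function `P̄`: given `l ≤ u`, a function
`f` convex on `[l, u]`, and `M ≥ 0` with `|f s - f t| ≤ M * |s - t|` for all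
`s, t ∈ [l, u]` (`M` sufficiently large relative to the slopes of `f`), the function
`P̄` defined by `P̄ s = f l - M * (s - l)` for `s < l`, `P̄ s = f s` for `l ≤ s ≤ u`,
and `P̄ s = f u + M * (s - u)` for `s > u`, is convex on `ℝ`. -/
theorem Pbar_convex
    (l u M : ℝ) (hlu : l ≤ u) (hM : 0 ≤ M)
    (f : ℝ → ℝ) (hf : ConvexOn ℝ (Set.Icc l u) f)
    (hLip : ∀ s ∈ Set.Icc l u, ∀ t ∈ Set.Icc l u, |f s - f t| ≤ M * |s - t|)
    (Pbar : ℝ → ℝ)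
    (h1 : ∀ s : ℝ, s < l → Pbar s = f l - M * (s - l))
    (h2 : ∀ s : ℝ, l ≤ s → s ≤ u → Pbar s = f s)
    (h3 : ∀ s : ℝ, u < s → Pbar s = f u + M * (s - u)) :
    ConvexOn ℝ Set.univ Pbar := by
  -- boundary-inclusive formulas
  have eL : ∀ t : ℝ, t ≤ l → Pbar t = f l - M * (t - l) := by
    intro t ht
    rcases lt_or_eq_of_le ht with h | h
    · exact h1 t h
    · subst h; rw [h2 t le_rfl hlu]; ring
  have eR : ∀ t : ℝ, u ≤ t → Pbar t = f u + M * (t - u) := by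
    intro t ht
    rcases lt_or_eq_of_le ht with h | h
    · exact h3 t h
    · rw [← h, h2 u hlu le_rfl]; ring
  -- Lipschitz bound for f, unpacked
  have fLip : ∀ a ∈ Set.Icc l u, ∀ b ∈ Set.Icc l u, a ≤ b →
      -(M * (b - a)) ≤ f b - f a ∧ f b - f a ≤ M * (b - a) := by
    intro a ha b hb hab
    have := hLip b hb a ha
    rw [abs_of_nonneg (by linarith : (0:ℝ) ≤ b - a)] at this
    have h := abs_le.mp this
    exact ⟨h.1, h.2⟩
  -- global Lipschitz bound for Pbar
  have PLip : ∀ a b : ℝ, a ≤ b →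
      -(M * (b - a)) ≤ Pbar b - Pbar a ∧ Pbar b - Pbar a ≤ M * (b - a) := by
    intro a b hab
    have hlI : l ∈ Set.Icc l u := ⟨le_rfl, hlu⟩
    have huI : u ∈ Set.Icc l u := ⟨hlu, le_rfl⟩
    rcases le_total b l with hbl | hlb
    · rw [eL a (hab.trans hbl), eL b hbl]
      constructor <;> nlinarith
    · rcases le_total a l with hal | hla
      · rcases le_total b u with hbu | hub
        · have hb : b ∈ Set.Icc l u := ⟨hlb, hbu⟩
          have := fLip l hlI b hb hlb
          rw [eL a hal, h2 b hlb hbu]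
          constructor <;> nlinarith
        · have := fLip l hlI u huI hlu
          rw [eL a hal, eR b hub]
          constructor <;> nlinarith
      · rcases le_total b u with hbu | hub
        · have ha : a ∈ Set.Icc l u := ⟨hla, hab.trans hbu⟩
          have hb : b ∈ Set.Icc l u := ⟨hla.trans hab, hbu⟩
          have := fLip a ha b hb hab
          rw [h2 a hla (hab.trans hbu), h2 b (hla.trans hab) hbu]
          constructor <;> nlinarith
        · rcases le_total a u with hau | hua
          · have ha : a ∈ Set.Icc l u := ⟨hla, hau⟩
            have := fLip a ha u huI hau
            rw [h2 a hla hau, eR b hub]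
            constructor <;> nlinarith
          · rw [eR a hua, eR b (hua.trans hab)]
            constructor <;> nlinarith
    -- main slope argument
  apply convexOn_of_slope_mono_adjacent convex_univ
  intro x y z _ _ hxy hyz
  have hyx : (0:ℝ) < y - x := by linarith
  have hzy : (0:ℝ) < z - y := by linarith
  rcases le_total y l with hyl | hly
  · -- y ≤ l : left slope is exactly -M, right slope ≥ -M
    have hx : Pbar x = f l - M * (x - l) := eL x (hxy.le.trans hyl)
    have hy : Pbar y = f l - M * (y - l) := eL y hyl
    have hleft : (Pbar y - Pbar x) / (y - x) = -M := by
      rw [hx, hy]; field_simp; ring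
    have hright := (PLip y z hyz.le).1
    rw [hleft, le_div_iff₀ hzy]
    nlinarith
  · rcases le_total u y with huy | hyu
    · -- u ≤ y : right slope is exactly M, left slope ≤ M
      have hy : Pbar y = f u + M * (y - u) := eR y huy
      have hz : Pbar z = f u + M * (z - u) := eR z (huy.trans hyz.le)
      have hright : (Pbar z - Pbar y) / (z - y) = M := by
        rw [hy, hz]; field_simp; ring
      have hleft := (PLip x y hxy.le).2
      rw [hright, div_le_iff₀ hyx]
      nlinarith
    · -- middle cases: need strict l < y and y < u, else fall back to linear-side cases
      rcases eq_or_lt_of_le hly with h | hly'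
      · -- y = l : left slope = -M
        have hx : Pbar x = f l - M * (x - l) := eL x (by linarith)
        have hy : Pbar y = f l - M * (y - l) := eL y (le_of_eq h.symm)
        have hleft : (Pbar y - Pbar x) / (y - x) = -M := by
          rw [hx, hy]; field_simp; ring
        have hright := (PLip y z hyz.le).1
        rw [hleft, le_div_iff₀ hzy]
        nlinarith
      rcases eq_or_lt_of_le hyu with h | hyu'
      · -- y = u : right slope = M
        have hy : Pbar y = f u + M * (y - u) := eR y (le_of_eq h.symm)
        have hz : Pbar z = f u + M * (z - u) := eR z (by linarith)
        have hright : (Pbar z - Pbar y) / (z - y) = M := by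
          rw [hy, hz]; field_simp; ring
        have hleft := (PLip x y hxy.le).2
        rw [hright, div_le_iff₀ hyx]
        nlinarith
      -- now l < y < u
      have hyI : y ∈ Set.Icc l u := ⟨hly, hyu⟩
      set a := max x l with ha_def
      set b := min z u with hb_def
      have hay : a < y := max_lt hxy hly'
      have hyb : y < b := lt_min hyz hyu'
      have haI : a ∈ Set.Icc l u := ⟨le_max_right x l, by linarith [hay]⟩
      have hbI : b ∈ Set.Icc l u := ⟨by linarith [hyb], min_le_right z u⟩
      have hmid := hf.slope_mono_adjacent haI hbI hay hyb
      have hya : (0:ℝ) < y - a := by linarith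
      have hby : (0:ℝ) < b - y := by linarith
      have hyM : Pbar y = f y := h2 y hly hyu
      have CL : (Pbar y - Pbar x) / (y - x) ≤ (f y - f a) / (y - a) := by
        rcases le_total l x with hlx | hxl
        · have hax : a = x := max_eq_left hlx
          rw [hax, hyM, h2 x hlx (by linarith : x ≤ u)]
        · have hal : a = l := max_eq_right hxl
          rw [hal, hyM, eL x hxl]
          rw [div_le_div_iff₀ hyx (by linarith : (0:ℝ) < y - l)]
          have hA := (fLip l ⟨le_rfl, hlu⟩ y hyI hly).1
          have key : 0 ≤ (l - x) * ((f y - f l) + M * (y - l)) :=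
            mul_nonneg (by linarith) (by linarith)
          nlinarith
      have CR : (f b - f y) / (b - y) ≤ (Pbar z - Pbar y) / (z - y) := by
        rcases le_total z u with hzu | huz
        · have hbz : b = z := min_eq_left hzu
          rw [hbz, hyM, h2 z (by linarith : l ≤ z) hzu]
        · have hbu : b = u := min_eq_right huz
          rw [hbu, hyM, eR z huz]
          rw [div_le_div_iff₀ (by linarith : (0:ℝ) < u - y) hzy]
          have hA := (fLip y hyI u ⟨hlu, le_rfl⟩ hyu).2
          have key : 0 ≤ (z - u) * (M * (u - y) - (f u - f y)) :=
            mul_nonneg (by linarith) (by linarith)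
          nlinarith
      exact CL.trans (hmid.trans CR)
end
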